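/- Let q ≥ 2, a ≥ 1, integers k_1 ≥ k_2 ≥ … ≥ k_a ≥ 0 =: k_{a+1}, and vectors b_1,…,b_{k_1} ∈ ℤ_qⁿ, and let Λ_D be the associated Construction D set. Then the number of points of Λ_D inside the box [0, q^a)ⁿ satisfies |Λ_D ∩ [0,q^a)ⁿ| ≤ ∏_{s=1}^{a} ∏_{i=k_{s+1}+1}^{k_s} O(b_i)·q^{s−1} = q^{k_2 + k_3 + … + k_a} · ∏_{i=1}^{k_1} O(b_i), where O(b_i) is the order of b_i in ℤ_qⁿ. -/

import Mathlib

/-- The Construction D set associated to `q`, `a`, parameters `k` (with `k (a+1) = 0`)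
and vectors `b 1, …, b (k 1)` in `ℤ_qⁿ`. -/
def lambdaD (q a n : ℕ) (k : ℕ → ℕ) (b : ℕ → Fin n → ZMod q) : Set (Fin n → ℤ) :=
  {v | ∃ z : Fin n → ℤ, ∃ α : ℕ → ℕ → ℕ,
    (∀ s, 1 ≤ s → s ≤ a → ∀ i, k (s + 1) < i → i ≤ k s →
      α s i < addOrderOf (b i) * q ^ (s - 1)) ∧
    v = fun t => (q : ℤ) ^ a * z t
      + ∑ s ∈ Finset.Icc 1 a, ∑ i ∈ Finset.Ioc (k (s + 1)) (k s),
          (α s i : ℤ) * (q : ℤ) ^ (a - s) * (((b i) t).val : ℤ)}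

private lemma le_k_one (k : ℕ → ℕ) : ∀ a, (∀ s, 1 ≤ s → s ≤ a → k (s + 1) ≤ k s) →
    k (a + 1) ≤ k 1 := by
  intro a
  induction a with
  | zero => intro _; exact le_rfl
  | succ m ih =>
    intro h
    exact le_trans (h (m + 1) (by omega) le_rfl)
      (ih (fun s hs hs' => h s hs (by omega)))

private lemma prod_chain {M : Type*} [CommMonoid M] (k : ℕ → ℕ) (f : ℕ → M) :
    ∀ a, (∀ s, 1 ≤ s → s ≤ a → k (s + 1) ≤ k s) →
    ∏ s ∈ Finset.Icc 1 a, ∏ i ∈ Finset.Ioc (k (s + 1)) (k s), f i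
      = ∏ i ∈ Finset.Ioc (k (a + 1)) (k 1), f i := by
  intro a
  induction a with
  | zero => intro _; simp
  | succ m ih =>
    intro h
    rw [Finset.prod_Icc_succ_top (by omega : 1 ≤ m + 1),
      ih (fun s hs hs' => h s hs (by omega)), mul_comm]
    exact Finset.prod_Ioc_consecutive f (h (m + 1) (by omega) le_rfl)
      (le_k_one k m (fun s hs hs' => h s hs (by omega)))

private lemma sum_telescope (k : ℕ → ℕ) :
    ∀ a, (∀ s, 1 ≤ s → s ≤ a → k (s + 1) ≤ k s) →
    (∑ s ∈ Finset.Icc 1 a, (s - 1) * (k s - k (s + 1))) + a * k (a + 1)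
      = ∑ ℓ ∈ Finset.Icc 2 (a + 1), k ℓ := by
  intro a
  induction a with
  | zero => simp
  | succ m ih =>
    intro h
    rw [Finset.sum_Icc_succ_top (by omega : 1 ≤ m + 1),
      Finset.sum_Icc_succ_top (by omega : 2 ≤ m + 1 + 1)]
    rw [← ih (fun s hs hs' => h s hs (by omega))]
    have hle := h (m + 1) (by omega) le_rfl
    have e2 : (m + 1 - 1) * (k (m + 1) - k (m + 1 + 1)) + m * k (m + 1 + 1)
        = m * k (m + 1) := by
      rw [Nat.succ_sub_one, ← Nat.mul_add]
      congr 1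
      omega
    have e3 : (m + 1) * k (m + 1 + 1) = m * k (m + 1 + 1) + k (m + 1 + 1) :=
      Nat.succ_mul m (k (m + 1 + 1))
    omega

theorem card_lambdaD_box_le
    (q a n : ℕ) (hq : 2 ≤ q) (ha : 1 ≤ a)
    (k : ℕ → ℕ) (hk : ∀ s, 1 ≤ s → s ≤ a → k (s + 1) ≤ k s) (hka : k (a + 1) = 0)
    (b : ℕ → Fin n → ZMod q) :
    Set.ncard (lambdaD q a n k b ∩ {v : Fin n → ℤ | ∀ t, 0 ≤ v t ∧ v t < (q : ℤ) ^ a})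
      ≤ ∏ s ∈ Finset.Icc 1 a, ∏ i ∈ Finset.Ioc (k (s + 1)) (k s),
          addOrderOf (b i) * q ^ (s - 1) ∧
    ∏ s ∈ Finset.Icc 1 a, ∏ i ∈ Finset.Ioc (k (s + 1)) (k s),
        addOrderOf (b i) * q ^ (s - 1)
      = q ^ (∑ ℓ ∈ Finset.Icc 2 a, k ℓ) * ∏ i ∈ Finset.Icc 1 (k 1), addOrderOf (b i) := by
  classical
  constructor
  · -- cardinality bound
    set c : (ℕ → ℕ → ℕ) → Fin n → ℤ := fun α t =>
      ∑ s ∈ Finset.Icc 1 a, ∑ i ∈ Finset.Ioc (k (s + 1)) (k s),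
        (α s i : ℤ) * (q : ℤ) ^ (a - s) * (((b i) t).val : ℤ) with hc
    set S := lambdaD q a n k b ∩ {v : Fin n → ℤ | ∀ t, 0 ≤ v t ∧ v t < (q : ℤ) ^ a} with hS
    set I : Finset ((_ : ℕ) × ℕ) :=
      (Finset.Icc 1 a).sigma (fun s => Finset.Ioc (k (s + 1)) (k s)) with hI
    have key : ∀ v ∈ S, ∃ α : ℕ → ℕ → ℕ,
        (∀ s, 1 ≤ s → s ≤ a → ∀ i, k (s + 1) < i → i ≤ k s →
          α s i < addOrderOf (b i) * q ^ (s - 1)) ∧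
        ∀ t, v t = c α t % (q : ℤ) ^ a := by
      rintro v ⟨⟨z, α, hα, rfl⟩, hbox⟩
      refine ⟨α, hα, fun t => ?_⟩
      have hb0 : (0 : ℤ) ≤ (q : ℤ) ^ a * z t + c α t := (hbox t).1
      have hb1 : (q : ℤ) ^ a * z t + c α t < (q : ℤ) ^ a := (hbox t).2
      show (q : ℤ) ^ a * z t + c α t = c α t % (q : ℤ) ^ a
      rw [← Int.emod_eq_of_lt hb0 hb1, add_comm, mul_comm, Int.add_mul_emod_self_right]
    choose! α hα1 hα2 using key
    let F : S → (∀ p : I, Fin (addOrderOf (b p.1.2) * q ^ (p.1.1 - 1))) := fun v p =>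
      ⟨α v p.1.1 p.1.2, by
        have hp := Finset.mem_sigma.mp p.2
        rw [Finset.mem_Icc] at hp
        rw [Finset.mem_Ioc] at hp
        exact hα1 v v.2 p.1.1 hp.1.1 hp.1.2 p.1.2 hp.2.1 hp.2.2⟩
    have hFinj : Function.Injective F := by
      intro v w h
      have hagree : ∀ s i, s ∈ Finset.Icc 1 a → i ∈ Finset.Ioc (k (s + 1)) (k s) →
          α v s i = α w s i := by
        intro s i hs hi
        have := congrFun h ⟨⟨s, i⟩, Finset.mem_sigma.mpr ⟨hs, hi⟩⟩
        exact congrArg Fin.val this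
      have hceq : c (α v) = c (α w) := by
        funext t
        refine Finset.sum_congr rfl fun s hs => Finset.sum_congr rfl fun i hi => ?_
        rw [hagree s i hs hi]
      ext t
      rw [hα2 v v.2 t, hα2 w w.2 t, hceq]
    calc S.ncard = Nat.card S := (Nat.card_coe_set_eq S).symm
      _ ≤ Nat.card (∀ p : I, Fin (addOrderOf (b p.1.2) * q ^ (p.1.1 - 1))) :=
          Nat.card_le_card_of_injective F hFinj
      _ = ∏ p ∈ I, addOrderOf (b p.2) * q ^ (p.1 - 1) := by
          rw [Nat.card_eq_fintype_card, Fintype.card_pi]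
          simp only [Fintype.card_fin]
          exact Finset.prod_coe_sort I (fun p => addOrderOf (b p.2) * q ^ (p.1 - 1))
      _ = ∏ s ∈ Finset.Icc 1 a, ∏ i ∈ Finset.Ioc (k (s + 1)) (k s),
            addOrderOf (b i) * q ^ (s - 1) := by
          rw [hI, Finset.prod_sigma]
  · -- product identity
    have hsplit : ∏ s ∈ Finset.Icc 1 a, ∏ i ∈ Finset.Ioc (k (s + 1)) (k s),
        addOrderOf (b i) * q ^ (s - 1)
        = (∏ s ∈ Finset.Icc 1 a, ∏ i ∈ Finset.Ioc (k (s + 1)) (k s), addOrderOf (b i))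
          * ∏ s ∈ Finset.Icc 1 a, ∏ i ∈ Finset.Ioc (k (s + 1)) (k s), q ^ (s - 1) := by
      rw [← Finset.prod_mul_distrib]
      exact Finset.prod_congr rfl fun s _ => Finset.prod_mul_distrib
    rw [hsplit, prod_chain k (fun i => addOrderOf (b i)) a hk, hka]
    have h1 : Finset.Ioc 0 (k 1) = Finset.Icc 1 (k 1) := by
      rw [← Finset.Icc_add_one_left_eq_Ioc]
      rfl
    rw [h1, mul_comm]
    congr 1
    have h2 : ∀ s ∈ Finset.Icc 1 a, ∏ i ∈ Finset.Ioc (k (s + 1)) (k s), q ^ (s - 1)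
        = q ^ ((s - 1) * (k s - k (s + 1))) := by
      intro s _
      rw [Finset.prod_const, Nat.card_Ioc, ← pow_mul]
    rw [Finset.prod_congr rfl h2, Finset.prod_pow_eq_pow_sum]
    congr 1
    have ht := sum_telescope k a hk
    rw [hka, Nat.mul_zero, Nat.add_zero] at ht
    rw [ht, Finset.sum_Icc_succ_top (by omega : 2 ≤ a + 1), hka]
    omega
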